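/- Local sensitivity of the univariate median via order statistics: for a univariate sample X_1, ..., X_n with order statistics X_{(1)} ≤ ... ≤ X_{(n)}, and any dataset Y obtained by changing at most k of the observations (k < n/2 - 1), the medians satisfy |med(X) - med(Y)| ≤ max(X_{(m+k)} - X_{(m)}, X_{(m)} - X_{(m-k)}), where m = ⌊(n+1)/2⌋ and med denotes the middle order statistic (take the lower middle for even n). -/

import Mathlib

open scoped Classical

/-- The `j`-th order statistic (1-indexed) of the sample `X 0, ..., X (n-1)`. -/
noncomputable def orderStat {n : ℕ} (X : Fin n → ℝ) (j : ℕ) : ℝ :=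
  ((Multiset.map X Finset.univ.val).sort (· ≤ ·)).getD (j - 1) 0

/-- The sample median: the `⌊(n+1)/2⌋`-th order statistic (the lower middle for even `n`). -/
noncomputable def sampleMedian {n : ℕ} (X : Fin n → ℝ) : ℝ :=
  orderStat X ((n + 1) / 2)

/-- Characterization of order statistics via counting: the `j`-th order statistic is `≤ t`
iff at least `j` of the observations are `≤ t`. -/
lemma orderStat_le_iff {n : ℕ} (X : Fin n → ℝ) {j : ℕ} (hj1 : 1 ≤ j) (hjn : j ≤ n) (t : ℝ) :
    orderStat X j ≤ t ↔ j ≤ (Finset.univ.filter (fun i => X i ≤ t)).card := by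
  classical
  set L := ((Multiset.map X Finset.univ.val).sort (· ≤ ·)) with hL
  have hlen : L.length = n := by simp [hL]
  have hsorted : L.Pairwise (· ≤ ·) := Multiset.pairwise_sort _ _
  have hidx : j - 1 < L.length := by omega
  have hget : orderStat X j = L[j-1] := List.getD_eq_getElem L 0 hidx
  have hcnt : (Finset.univ.filter (fun i => X i ≤ t)).card
      = (L.filter (fun x => decide (x ≤ t))).length := by
    have h1 : (↑L : Multiset ℝ) = Multiset.map X Finset.univ.val := Multiset.sort_eq _ _
    have h2 : ((↑L : Multiset ℝ).filter (fun x => x ≤ t)).card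
        = (L.filter (fun x => decide (x ≤ t))).length := by
      simp [Multiset.filter_coe]
    rw [← h2, h1, Multiset.filter_map, Multiset.card_map]
    rw [Finset.card, Finset.filter_val]
    congr 1
  rw [hget, hcnt]
  constructor
  · intro h
    have hsub : ((L.take j).filter (fun x => decide (x ≤ t))).Sublist
        (L.filter (fun x => decide (x ≤ t))) := (List.take_sublist j L).filter _
    have heq : (L.take j).filter (fun x => decide (x ≤ t)) = L.take j := by
      rw [List.filter_eq_self]
      intro a ha
      obtain ⟨i, hi, rfl⟩ := List.mem_iff_getElem.1 ha
      have hij : i ≤ j - 1 := by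
        have := hi; rw [List.length_take] at this; omega
      have heq2 : (L.take j)[i] = L[i]'(by omega) := List.getElem_take (xs := L)
      rw [heq2]
      have hle : L[i]'(by omega) ≤ L[j-1] := by
        have := hsorted.rel_get_of_le (a := ⟨i, by omega⟩) (b := ⟨j-1, hidx⟩) hij
        simpa using this
      simp only [decide_eq_true_eq]
      exact le_trans hle h
    have hlen' : (L.take j).length = j := by rw [List.length_take]; omega
    calc j = ((L.take j).filter (fun x => decide (x ≤ t))).length := by rw [heq, hlen']
    _ ≤ _ := hsub.length_le
  · intro h
    by_contra hlt
    push_neg at hlt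
    have hdrop : ∀ a ∈ L.drop (j-1), ¬ (a ≤ t) := by
      intro a ha
      obtain ⟨i, hi, rfl⟩ := List.mem_iff_getElem.1 ha
      have hib : j - 1 + i < L.length := by
        have := hi; rw [List.length_drop] at this; omega
      have heq2 : (L.drop (j-1))[i] = L[j-1+i]'hib := List.getElem_drop (xs := L)
      rw [heq2]
      have hle : L[j-1] ≤ L[j-1+i]'hib := by
        have := hsorted.rel_get_of_le (a := ⟨j-1, hidx⟩) (b := ⟨j-1+i, hib⟩)
          (by simp)
        simpa using this
      exact fun hc => absurd (le_trans hle hc) (not_le.2 hlt)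
    have hsplit : L.filter (fun x => decide (x ≤ t))
        = (L.take (j-1)).filter (fun x => decide (x ≤ t)) := by
      conv_lhs => rw [← List.take_append_drop (j-1) L]
      rw [List.filter_append]
      have hnil : (L.drop (j-1)).filter (fun x => decide (x ≤ t)) = [] := by
        rw [List.filter_eq_nil_iff]
        intro a ha
        simpa using hdrop a ha
      rw [hnil, List.append_nil]
    rw [hsplit] at h
    have : ((L.take (j-1)).filter (fun x => decide (x ≤ t))).length ≤ j - 1 := by
      calc _ ≤ (L.take (j-1)).length := List.length_filter_le _ _
      _ ≤ j - 1 := by rw [List.length_take]; omega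
    omega

/-- Changing at most `k` observations changes the count of observations `≤ t` by at most `k`. -/
lemma cnt_perturb {n : ℕ} (X Y : Fin n → ℝ) (k : ℕ)
    (hdiff : (Finset.univ.filter (fun i => X i ≠ Y i)).card ≤ k) (t : ℝ) :
    (Finset.univ.filter (fun i => X i ≤ t)).card ≤
      (Finset.univ.filter (fun i => Y i ≤ t)).card + k := by
  classical
  have hsub : (Finset.univ.filter (fun i => X i ≤ t)) ⊆
      (Finset.univ.filter (fun i => Y i ≤ t)) ∪ (Finset.univ.filter (fun i => X i ≠ Y i)) := by
    intro i hi
    simp only [Finset.mem_filter, Finset.mem_union, Finset.mem_univ, true_and] at *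
    by_cases h : X i = Y i
    · exact Or.inl (h ▸ hi)
    · exact Or.inr h
  calc (Finset.univ.filter (fun i => X i ≤ t)).card
      ≤ ((Finset.univ.filter (fun i => Y i ≤ t)) ∪ (Finset.univ.filter (fun i => X i ≠ Y i))).card :=
        Finset.card_le_card hsub
    _ ≤ (Finset.univ.filter (fun i => Y i ≤ t)).card + (Finset.univ.filter (fun i => X i ≠ Y i)).card :=
        Finset.card_union_le _ _
    _ ≤ _ := by omega

/-- Local sensitivity of the median via order statistics: if `Y` is obtained from `X` by
changing at most `k` observations, with `k < n/2 - 1`, then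
`|med(X) - med(Y)| ≤ max(X_{(m+k)} - X_{(m)}, X_{(m)} - X_{(m-k)})` where
`m = ⌊(n+1)/2⌋`. -/
theorem median_local_sensitivity {n : ℕ} (X Y : Fin n → ℝ) (k : ℕ)
    (hk : (k : ℝ) < (n : ℝ) / 2 - 1)
    (hdiff : (Finset.univ.filter (fun i => X i ≠ Y i)).card ≤ k) :
    |sampleMedian X - sampleMedian Y| ≤
      max (orderStat X ((n + 1) / 2 + k) - orderStat X ((n + 1) / 2))
        (orderStat X ((n + 1) / 2) - orderStat X ((n + 1) / 2 - k)) := by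
  classical
  have hn : 2 * k + 3 ≤ n := by
    have h1 : ((2*k+2 : ℕ) : ℝ) < (n : ℝ) := by push_cast; linarith
    have h2 : 2*k+2 < n := by exact_mod_cast h1
    omega
  set m := (n + 1) / 2 with hm
  have hm1 : 1 ≤ m := by omega
  have hmn : m ≤ n := by omega
  have hmk2 : k + 2 ≤ m := by omega
  have hmkn : m + k ≤ n := by omega
  have hdiff' : (Finset.univ.filter (fun i => Y i ≠ X i)).card ≤ k := by
    have heq : (Finset.univ.filter (fun i => Y i ≠ X i))
        = (Finset.univ.filter (fun i => X i ≠ Y i)) := by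
      apply Finset.filter_congr; intro i _; simp [ne_comm]
    rw [heq]; exact hdiff
  have hub : sampleMedian Y ≤ orderStat X (m + k) := by
    rw [sampleMedian, ← hm, orderStat_le_iff Y hm1 hmn]
    have h1 : m + k ≤ (Finset.univ.filter (fun i => X i ≤ orderStat X (m+k))).card :=
      (orderStat_le_iff X (by omega) hmkn _).1 le_rfl
    have h2 := cnt_perturb X Y k hdiff (orderStat X (m+k))
    omega
  have hlb : orderStat X (m - k) ≤ sampleMedian Y := by
    rw [sampleMedian, ← hm, orderStat_le_iff X (by omega) (by omega)]
    have h1 : m ≤ (Finset.univ.filter (fun i => Y i ≤ orderStat Y m)).card :=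
      (orderStat_le_iff Y hm1 hmn _).1 le_rfl
    have h2 := cnt_perturb Y X k hdiff' (orderStat Y m)
    omega
  have hXub : sampleMedian X ≤ orderStat X (m + k) := by
    rw [sampleMedian, ← hm, orderStat_le_iff X hm1 hmn]
    have h1 : m + k ≤ (Finset.univ.filter (fun i => X i ≤ orderStat X (m+k))).card :=
      (orderStat_le_iff X (by omega) hmkn _).1 le_rfl
    omega
  have hXlb : orderStat X (m - k) ≤ sampleMedian X := by
    rw [sampleMedian, ← hm, orderStat_le_iff X (by omega) (by omega)]
    have h1 : m ≤ (Finset.univ.filter (fun i => X i ≤ orderStat X m)).card :=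
      (orderStat_le_iff X hm1 hmn _).1 le_rfl
    omega
  have hsm : sampleMedian X = orderStat X m := rfl
  rw [abs_sub_le_iff]
  have e1 : sampleMedian X - sampleMedian Y ≤ orderStat X m - orderStat X (m - k) := by
    rw [hsm]; linarith
  have e2 : sampleMedian Y - sampleMedian X ≤ orderStat X (m + k) - orderStat X m := by
    rw [hsm]; linarith
  exact ⟨le_trans e1 (le_max_right _ _), le_trans e2 (le_max_left _ _)⟩
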